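/- Let β ∈ ℝ with β > 0 (so Im(β) = 0), ε > 0, k ∈ ℕ, and R > exp^∘k(0) with M_{ε,k}(R) < β. Let D ⊆ ℂ satisfy Re(ζ) ≥ R for all ζ ∈ D, and let f : D → D satisfy |f(ζ) − (ζ + β)| ≤ M_{ε,k}(Re(ζ)) for all ζ ∈ D. Suppose moreover that f preserves real points: for every ζ ∈ D with Im(ζ) = 0, also Im(f(ζ)) = 0. Then for every ζ ∈ D with Im(ζ) = 0, the limit φ(ζ) := lim_{n→∞} (f^∘n(ζ) − n·β) exists and satisfies Im(φ(ζ)) = 0. -/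

import Mathlib

open Filter Set

/-- `M_{ε,k}(x) = (∏_{j=0}^{k-1} log^∘j(x))⁻¹ · (log^∘k(x))^{-(1+ε)}`. -/
noncomputable def Mfun (ε : ℝ) (k : ℕ) (x : ℝ) : ℝ :=
  (∏ j ∈ Finset.range k, Real.log^[j] x)⁻¹ * (Real.log^[k] x) ^ (-(1 + ε))

lemma expIter_nonneg (m : ℕ) : 0 ≤ Real.exp^[m] 0 := by
  cases m with
  | zero => simp
  | succ n => rw [Function.iterate_succ_apply']; exact (Real.exp_pos _).le

lemma expIter_mono (m : ℕ) : Real.exp^[m] 0 ≤ Real.exp^[m+1] 0 := by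
  rw [Function.iterate_succ_apply']
  linarith [Real.add_one_le_exp (Real.exp^[m] 0)]

/-- iterated log stays above the corresponding exp tower -/
lemma logIter_gt {k : ℕ} {x : ℝ} (hx : Real.exp^[k] 0 < x) :
    ∀ j ≤ k, Real.exp^[k - j] 0 < Real.log^[j] x := by
  intro j hj
  induction j with
  | zero => simpa using hx
  | succ i ih =>
    have hik : i ≤ k := Nat.le_of_succ_le hj
    have h1 : Real.exp^[k - i] 0 < Real.log^[i] x := ih hik
    have hki : k - i = (k - (i+1)) + 1 := by omega
    rw [Function.iterate_succ_apply']
    have h2 : Real.exp (Real.exp^[k - (i+1)] 0) < Real.log^[i] x := by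
      rw [hki, Function.iterate_succ_apply'] at h1; exact h1
    exact (Real.lt_log_iff_exp_lt (lt_trans (Real.exp_pos _) h2)).mpr h2

lemma logIter_pos {k : ℕ} {x : ℝ} (hx : Real.exp^[k] 0 < x) {j : ℕ} (hj : j ≤ k) :
    0 < Real.log^[j] x :=
  lt_of_le_of_lt (expIter_nonneg _) (logIter_gt hx j hj)

lemma logIter_le {k : ℕ} {x y : ℝ} (hx : Real.exp^[k] 0 < x) (hxy : x ≤ y) :
    ∀ j ≤ k, Real.log^[j] x ≤ Real.log^[j] y := by
  intro j hj
  induction j with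
  | zero => simpa using hxy
  | succ i ih =>
    have hik : i ≤ k := Nat.le_of_succ_le hj
    rw [Function.iterate_succ_apply', Function.iterate_succ_apply']
    exact Real.log_le_log (logIter_pos hx hik) (ih hik)

lemma prod_logIter_pos {k : ℕ} {x : ℝ} (hx : Real.exp^[k] 0 < x) :
    0 < ∏ j ∈ Finset.range k, Real.log^[j] x :=
  Finset.prod_pos fun j hj => logIter_pos hx (Finset.mem_range.mp hj).le

lemma Mfun_pos {ε : ℝ} {k : ℕ} {x : ℝ} (hx : Real.exp^[k] 0 < x) :
    0 < Mfun ε k x :=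
  mul_pos (inv_pos.mpr (prod_logIter_pos hx)) (Real.rpow_pos_of_pos (logIter_pos hx le_rfl) _)

lemma Mfun_anti {ε : ℝ} (hε : 0 < ε) {k : ℕ} {x y : ℝ} (hx : Real.exp^[k] 0 < x)
    (hxy : x ≤ y) : Mfun ε k y ≤ Mfun ε k x := by
  have hprod : ∏ j ∈ Finset.range k, Real.log^[j] x ≤ ∏ j ∈ Finset.range k, Real.log^[j] y :=
    Finset.prod_le_prod (fun j hj => (logIter_pos hx (Finset.mem_range.mp hj).le).le)
      (fun j hj => logIter_le hx hxy j (Finset.mem_range.mp hj).le)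
  have h1 : (∏ j ∈ Finset.range k, Real.log^[j] y)⁻¹ ≤
      (∏ j ∈ Finset.range k, Real.log^[j] x)⁻¹ :=
    inv_anti₀ (prod_logIter_pos hx) hprod
  have h2 : (Real.log^[k] y) ^ (-(1 + ε)) ≤ (Real.log^[k] x) ^ (-(1 + ε)) :=
    Real.rpow_le_rpow_of_nonpos (logIter_pos hx le_rfl) (logIter_le hx hxy k le_rfl)
      (by linarith)
  exact mul_le_mul h1 h2 (Real.rpow_pos_of_pos (lt_of_lt_of_le (logIter_pos hx le_rfl)
    (logIter_le hx hxy k le_rfl)) _).le (inv_pos.mpr (prod_logIter_pos hx)).le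

lemma hasDerivAt_logIter {k : ℕ} {x : ℝ} (hx : Real.exp^[k] 0 < x) :
    HasDerivAt (fun y => Real.log^[k] y)
      ((∏ j ∈ Finset.range k, Real.log^[j] x)⁻¹) x := by
  induction k with
  | zero =>
    simp only [Function.iterate_zero, id_eq, Finset.range_zero, Finset.prod_empty, inv_one]
    exact hasDerivAt_id' x
  | succ n ih =>
    have hxn : Real.exp^[n] 0 < x := lt_of_le_of_lt (expIter_mono n) hx
    have hlog : HasDerivAt Real.log (Real.log^[n] x)⁻¹ (Real.log^[n] x) :=
      Real.hasDerivAt_log (logIter_pos hx n.le_succ).ne'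
    have := hlog.comp x (ih hxn)
    have heq : (Real.log ∘ Real.log^[n]) = fun y => Real.log^[n+1] y := by
      funext y; rw [Function.comp_apply, Function.iterate_succ_apply']
    rw [heq] at this
    rw [Finset.prod_range_succ, mul_inv, mul_comm]
    exact this

noncomputable def Ffun (ε : ℝ) (k : ℕ) (x : ℝ) : ℝ := ε⁻¹ * (Real.log^[k] x) ^ (-ε)

lemma Ffun_pos {ε : ℝ} (hε : 0 < ε) {k : ℕ} {x : ℝ} (hx : Real.exp^[k] 0 < x) :
    0 < Ffun ε k x :=
  mul_pos (inv_pos.mpr hε) (Real.rpow_pos_of_pos (logIter_pos hx le_rfl) _)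

lemma hasDerivAt_Ffun {ε : ℝ} (hε : 0 < ε) {k : ℕ} {x : ℝ} (hx : Real.exp^[k] 0 < x) :
    HasDerivAt (Ffun ε k) (-(Mfun ε k x)) x := by
  have hg := hasDerivAt_logIter hx
  have hpos : (0:ℝ) < Real.log^[k] x := logIter_pos hx le_rfl
  have hr : HasDerivAt (fun y : ℝ => y ^ (-ε))
      ((-ε) * (Real.log^[k] x) ^ (-ε - 1)) (Real.log^[k] x) :=
    Real.hasDerivAt_rpow_const (Or.inl hpos.ne')
  have := (hr.comp x hg).const_mul ε⁻¹
  have h1 : -ε - 1 = -(1 + ε) := by ring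
  have h2 : ε⁻¹ * (-ε * Real.log^[k] x ^ (-ε - 1) *
      (∏ j ∈ Finset.range k, Real.log^[j] x)⁻¹) = -(Mfun ε k x) := by
    rw [Mfun, h1]
    have : ε⁻¹ * (-ε * Real.log^[k] x ^ (-(1+ε)) *
        (∏ j ∈ Finset.range k, Real.log^[j] x)⁻¹) =
        (ε⁻¹ * ε) * (-(( ∏ j ∈ Finset.range k, Real.log^[j] x)⁻¹ *
          Real.log^[k] x ^ (-(1+ε)))) := by ring
    rw [this, inv_mul_cancel₀ hε.ne', one_mul]
  rw [h2] at this
  exact this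

lemma key_step {ε : ℝ} (hε : 0 < ε) {k : ℕ} {x δ : ℝ} (hx : Real.exp^[k] 0 < x)
    (hδ : 0 < δ) : δ * Mfun ε k (x + δ) ≤ Ffun ε k x - Ffun ε k (x + δ) := by
  have hlt : x < x + δ := by linarith
  have hcont : ContinuousOn (Ffun ε k) (Icc x (x + δ)) := fun y hy =>
    (hasDerivAt_Ffun hε (lt_of_lt_of_le hx hy.1)).continuousAt.continuousWithinAt
  obtain ⟨c, hc, hceq⟩ := exists_hasDerivAt_eq_slope (Ffun ε k)
    (fun y => -(Mfun ε k y)) hlt hcont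
    (fun y hy => hasDerivAt_Ffun hε (lt_trans hx hy.1))
  have hMc : Mfun ε k (x + δ) ≤ Mfun ε k c := Mfun_anti hε (lt_trans hx hc.1) hc.2.le
  have : -(Mfun ε k c) = (Ffun ε k (x + δ) - Ffun ε k x) / δ := by
    rw [hceq]; ring_nf
  have h2 : Ffun ε k x - Ffun ε k (x + δ) = δ * Mfun ε k c := by
    field_simp at this; linarith
  rw [h2]
  exact mul_le_mul_of_nonneg_left hMc hδ.le

lemma Ffun_anti {ε : ℝ} (hε : 0 < ε) {k : ℕ} {x y : ℝ} (hx : Real.exp^[k] 0 < x)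
    (hxy : x ≤ y) : Ffun ε k y ≤ Ffun ε k x := by
  unfold Ffun
  apply mul_le_mul_of_nonneg_left _ (inv_pos.mpr hε).le
  exact Real.rpow_le_rpow_of_nonpos (logIter_pos hx le_rfl) (logIter_le hx hxy k le_rfl)
    (by linarith)

theorem koenigs_limit_preserves_real_points
    (β : ℝ) (hβ : 0 < β) (ε : ℝ) (hε : 0 < ε) (k : ℕ)
    (R : ℝ) (hR : Real.exp^[k] 0 < R) (hMR : Mfun ε k R < β)
    (D : Set ℂ) (hDre : ∀ ζ ∈ D, R ≤ ζ.re)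
    (f : ℂ → ℂ) (hinv : Set.MapsTo f D D)
    (hbound : ∀ ζ ∈ D, ‖f ζ - (ζ + (β : ℂ))‖ ≤ Mfun ε k ζ.re)
    (hreal : ∀ ζ ∈ D, ζ.im = 0 → (f ζ).im = 0) :
    ∀ ζ ∈ D, ζ.im = 0 →
      ∃ w : ℂ, Tendsto (fun n : ℕ => f^[n] ζ - (n : ℂ) * (β : ℂ)) atTop (nhds w) ∧
        w.im = 0 := by
  intro ζ hζ hζim
  set δ : ℝ := β - Mfun ε k R with hδdef
  have hδ : 0 < δ := by rw [hδdef]; linarith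
  set z : ℕ → ℂ := fun n => f^[n] ζ with hzdef
  have hzsucc : ∀ n, z (n + 1) = f (z n) := fun n => Function.iterate_succ_apply' f n ζ
  have hmem : ∀ n, z n ∈ D := by
    intro n; induction n with
    | zero => exact hζ
    | succ n ih => rw [hzsucc]; exact hinv ih
  have him : ∀ n, (z n).im = 0 := by
    intro n; induction n with
    | zero => exact hζim
    | succ n ih => rw [hzsucc]; exact hreal _ (hmem n) ih
  have hRe : ∀ n, R ≤ (z n).re := fun n => hDre _ (hmem n)
  have hdom : ∀ n, Real.exp^[k] 0 < (z n).re := fun n => lt_of_lt_of_le hR (hRe n)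
  -- step lower bound on real parts
  have hstep : ∀ n, (z n).re + δ ≤ (z (n + 1)).re := by
    intro n
    have hb := hbound (z n) (hmem n)
    have habs : |(f (z n) - (z n + (β : ℂ))).re| ≤ Mfun ε k (z n).re :=
      le_trans (Complex.abs_re_le_norm _) hb
    have hre : (f (z n) - (z n + (β : ℂ))).re = (f (z n)).re - (z n).re - β := by
      simp [Complex.sub_re, Complex.add_re]; ring
    rw [hre, abs_le] at habs
    have hM : Mfun ε k (z n).re ≤ Mfun ε k R := Mfun_anti hε hR (hRe n)
    rw [hzsucc]
    have := habs.1
    rw [hδdef]; linarith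
  -- summability of the error terms
  set u : ℕ → ℝ := fun n => Mfun ε k (z n).re with hudef
  have hu_pos : ∀ n, 0 < u n := fun n => Mfun_pos (hdom n)
  have htel : ∀ n, δ * u (n + 1) ≤ Ffun ε k (z n).re - Ffun ε k (z (n + 1)).re := by
    intro n
    have h1 : δ * Mfun ε k ((z n).re + δ) ≤
        Ffun ε k (z n).re - Ffun ε k ((z n).re + δ) := key_step hε (hdom n) hδ
    have hdom' : Real.exp^[k] 0 < (z n).re + δ := by linarith [hdom n]
    have h2 : u (n + 1) ≤ Mfun ε k ((z n).re + δ) := Mfun_anti hε hdom' (hstep n)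
    have h3 : Ffun ε k (z (n + 1)).re ≤ Ffun ε k ((z n).re + δ) :=
      Ffun_anti hε hdom' (hstep n)
    nlinarith [mul_le_mul_of_nonneg_left h2 hδ.le]
  have hsum1 : Summable (fun n => δ * u (n + 1)) := by
    apply summable_of_sum_range_le (c := Ffun ε k (z 0).re)
    · intro n; exact (mul_pos hδ (hu_pos (n + 1))).le
    · intro n
      calc ∑ i ∈ Finset.range n, δ * u (i + 1)
          ≤ ∑ i ∈ Finset.range n, (Ffun ε k (z i).re - Ffun ε k (z (i + 1)).re) :=
            Finset.sum_le_sum fun i _ => htel i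
        _ = Ffun ε k (z 0).re - Ffun ε k (z n).re := Finset.sum_range_sub' _ _
        _ ≤ Ffun ε k (z 0).re := by linarith [Ffun_pos hε (hdom n)]
  have hsum2 : Summable (fun n => u (n + 1)) := by
    have := hsum1.mul_left δ⁻¹
    simpa [inv_mul_cancel_left₀ hδ.ne'] using this
  have hsumu : Summable u := (summable_nat_add_iff 1).mp hsum2
  -- the increments
  set d : ℕ → ℂ := fun n => z (n + 1) - z n - (β : ℂ) with hddef
  have hdnorm : ∀ n, ‖d n‖ ≤ u n := by
    intro n
    have hb := hbound (z n) (hmem n)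
    have : d n = f (z n) - (z n + (β : ℂ)) := by simp only [hddef, hzsucc]; ring
    rw [this]; exact hb
  have hdsum : Summable d :=
    Summable.of_norm (hsumu.of_nonneg_of_le (fun n => norm_nonneg _) hdnorm)
  obtain ⟨S, hS⟩ := hdsum
  have hpsum : Tendsto (fun n => ∑ i ∈ Finset.range n, d i) atTop (nhds S) :=
    hS.tendsto_sum_nat
  have hident : ∀ n, z n - (n : ℂ) * (β : ℂ) = ζ + ∑ i ∈ Finset.range n, d i := by
    intro n; induction n with
    | zero => simp [hzdef]
    | succ n ih =>
      rw [Finset.sum_range_succ, ← add_assoc, ← ih, hddef]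
      push_cast
      ring
  refine ⟨ζ + S, ?_, ?_⟩
  · have : Tendsto (fun n => ζ + ∑ i ∈ Finset.range n, d i) atTop (nhds (ζ + S)) :=
      hpsum.const_add ζ
    convert this using 2 with n
    exact hident n
  · have htends : Tendsto (fun n => z n - (n : ℂ) * (β : ℂ)) atTop (nhds (ζ + S)) := by
      have : Tendsto (fun n => ζ + ∑ i ∈ Finset.range n, d i) atTop (nhds (ζ + S)) :=
        hpsum.const_add ζ
      convert this using 2 with n
      exact hident n
    have h1 : Tendsto (fun n => (z n - (n : ℂ) * (β : ℂ)).im) atTop (nhds (ζ + S).im) :=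
      (Complex.continuous_im.tendsto _).comp htends
    have h2 : (fun n => (z n - (n : ℂ) * (β : ℂ)).im) = fun _ => (0 : ℝ) := by
      funext n
      simp [Complex.sub_im, him n, Complex.mul_im]
    rw [h2] at h1
    exact tendsto_nhds_unique h1 tendsto_const_nhds
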